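/- For every real number x with 0 < x < π/2, the following double inequality holds: (4/π²)·(2 - √2) < (2 - sin x / sin(x/2)) / x² < 1/4. -/
import Mathlib


open Real

theorem sandor_second_inequality (x : ℝ) (hx : 0 < x) (hx' : x < π / 2) :
    (4 / π ^ 2) * (2 - Real.sqrt 2) < (2 - Real.sin x / Real.sin (x / 2)) / x ^ 2 ∧
    (2 - Real.sin x / Real.sin (x / 2)) / x ^ 2 < 1 / 4 := by
  have hπ : 0 < π := Real.pi_pos
  have hu0 : 0 < x / 4 := by linarith
  have hu1 : x / 4 < π / 8 := by linarith
  have hs4 : 0 < Real.sin (x / 4) := Real.sin_pos_of_pos_of_lt_pi hu0 (by nlinarith)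
  have hs2 : 0 < Real.sin (x / 2) := Real.sin_pos_of_pos_of_lt_pi (by linarith) (by nlinarith)
  -- key identity
  have hdouble : Real.sin x = 2 * Real.sin (x / 2) * Real.cos (x / 2) := by
    have := Real.sin_two_mul (x / 2)
    rw [show 2 * (x / 2) = x by ring] at this
    exact this
  have hsq : Real.sin (x / 4) ^ 2 = 1 / 2 - Real.cos (x / 2) / 2 := by
    have := Real.sin_sq_eq_half_sub (x / 4)
    rw [show 2 * (x / 4) = x / 2 by ring] at this
    exact this
  have hrw : 2 - Real.sin x / Real.sin (x / 2) = 4 * Real.sin (x / 4) ^ 2 := by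
    rw [hdouble]
    field_simp
    nlinarith [hsq]
  -- sin²(π/8) = (2 - √2)/4
  have hs8 : Real.sin (π / 8) ^ 2 = (2 - Real.sqrt 2) / 4 := by
    have := Real.sin_sq_eq_half_sub (π / 8)
    rw [show 2 * (π / 8) = π / 4 by ring, Real.cos_pi_div_four] at this
    rw [this]; ring
  have hs8pos : 0 < Real.sin (π / 8) :=
    Real.sin_pos_of_pos_of_lt_pi (by positivity) (by nlinarith)
  -- chord inequality from strict concavity: (2x/π) * sin(π/8) < sin(x/4)
  have hchord : 2 * x / π * Real.sin (π / 8) < Real.sin (x / 4) := by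
    have hb : (0:ℝ) < 2 * x / π := by positivity
    have hb1 : 2 * x / π < 1 := by
      rw [div_lt_one hπ]; linarith
    have ha : (0:ℝ) < 1 - 2 * x / π := by linarith
    have h := strictConcaveOn_sin_Icc.2 (x := 0) (y := π / 8)
      ⟨le_rfl, hπ.le⟩ ⟨by positivity, by nlinarith⟩ (by positivity)
      ha hb (by ring)
    simp only [smul_eq_mul, Real.sin_zero, mul_zero, zero_add] at h
    rw [show 2 * x / π * (π / 8) = x / 4 by field_simp; ring] at h
    linarith
  have hπ2 : (0:ℝ) < π ^ 2 := by positivity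
  constructor
  · rw [hrw, lt_div_iff₀ (by positivity)]
    rw [show 2 * x / π * Real.sin (π / 8) = 2 * x * Real.sin (π / 8) / π by ring] at hchord
    have hc2 : 2 * x * Real.sin (π / 8) < Real.sin (x / 4) * π := (div_lt_iff₀ hπ).mp hchord
    have hsq2 : (2 * x * Real.sin (π / 8)) ^ 2 < (Real.sin (x / 4) * π) ^ 2 :=
      pow_lt_pow_left₀ hc2 (by positivity) two_ne_zero
    rw [mul_pow, mul_pow, mul_pow, hs8] at hsq2
    rw [div_mul_eq_mul_div, div_mul_eq_mul_div, div_lt_iff₀ hπ2]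
    nlinarith [hsq2]
  · rw [hrw, div_lt_iff₀ (by positivity)]
    have := Real.sin_lt hu0
    nlinarith [hs4]
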